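/- Let φ ∈ X_{σ0} ∩ L^∞(Ω) and define the linearized operator 𝓛(φ) : X_{σ0} → X_{σ0}' by 𝓛(φ)u = 𝔄_σ u + g'(φ)u, where g ∈ C¹(ℝ). Let 𝓝 = Ker(𝓛(φ)) and let P : L²(Ω) → 𝓝 be the orthogonal projection. Then 𝓛(φ) + P is a linear isomorphism from X_{σ0} onto X_{σ0}'. -/

import Mathlib

open scoped RealInnerProductSpace

/-- Let `X = X_{σ0}` (a real Hilbert space whose inner product is the Gagliardo form,
so that the duality map `𝔄 = 𝔄_σ` satisfies `𝔄 u v = ⟪u,v⟫`), let `j : X → H = L²(Ω)` be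
the compact embedding, `m` the (bounded, symmetric) multiplication by `g'(φ) ∈ L^∞(Ω)`,
and `P` the orthogonal projection of `H` onto the kernel
`𝓝 = Ker 𝓛(φ) = Ker (Id + j† m j)` (viewed in `H` via `j`).  Then
`𝓛(φ) + P : u ↦ 𝔄(u + j†(m(j u)) + j†(P(j u)))` is a linear isomorphism from `X_{σ0}`
onto `X_{σ0}'`. -/
theorem linearized_operator_isomorphism (X H : Type*)
    [NormedAddCommGroup X] [InnerProductSpace ℝ X] [CompleteSpace X]
    [NormedAddCommGroup H] [InnerProductSpace ℝ H] [CompleteSpace H]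
    (𝔄 : X ≃L[ℝ] (X →L[ℝ] ℝ)) (h𝔄 : ∀ u v : X, 𝔄 u v = ⟪u, v⟫)
    (j : X →L[ℝ] H) (hjcompact : IsCompactOperator j) (hjinj : Function.Injective j)
    (m : H →L[ℝ] H) (hm : ∀ x y : H, ⟪m x, y⟫ = ⟪x, m y⟫)
    (P : H →L[ℝ] H)
    (hPrange : ∀ x : H, P x ∈ Submodule.map j.toLinearMap
      (LinearMap.ker (ContinuousLinearMap.id ℝ X
        + (ContinuousLinearMap.adjoint j).comp (m.comp j)).toLinearMap))
    (hPfix : ∀ x ∈ Submodule.map j.toLinearMap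
      (LinearMap.ker (ContinuousLinearMap.id ℝ X
        + (ContinuousLinearMap.adjoint j).comp (m.comp j)).toLinearMap), P x = x)
    (hPsym : ∀ x y : H, ⟪P x, y⟫ = ⟪x, P y⟫) :
    ∃ e : X ≃L[ℝ] (X →L[ℝ] ℝ), ∀ u : X,
      e u = 𝔄 (u + (ContinuousLinearMap.adjoint j) (m (j u))
              + (ContinuousLinearMap.adjoint j) (P (j u))) := by
  classical
  set j' := ContinuousLinearMap.adjoint j with hj'
  set L : X →L[ℝ] X := ContinuousLinearMap.id ℝ X + j'.comp (m.comp j) with hL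
  set T : X →L[ℝ] X := L + j'.comp (P.comp j) with hT
  have hTapp : ∀ u : X, T u = u + j' (m (j u)) + j' (P (j u)) := by
    intro u
    simp [hT, hL, add_assoc]
  -- symmetry
  have hLsym : ∀ x y : X, ⟪L x, y⟫ = ⟪x, L y⟫ := by
    intro x y
    simp only [hL, ContinuousLinearMap.add_apply, ContinuousLinearMap.coe_comp',
      ContinuousLinearMap.coe_id', Function.comp_apply, id_eq, inner_add_left, inner_add_right,
      hj', ContinuousLinearMap.adjoint_inner_left, ContinuousLinearMap.adjoint_inner_right]
    rw [hm]
  have hTsym : ∀ x y : X, ⟪T x, y⟫ = ⟪x, T y⟫ := by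
    intro x y
    simp only [hT, ContinuousLinearMap.add_apply, ContinuousLinearMap.coe_comp',
      Function.comp_apply, inner_add_left, inner_add_right, hLsym,
      hj', ContinuousLinearMap.adjoint_inner_left, ContinuousLinearMap.adjoint_inner_right]
    rw [hPsym]
  -- injectivity
  have hTzero : ∀ u : X, T u = 0 → u = 0 := by
    intro u hu
    obtain ⟨w, hw, hjw⟩ := hPrange (j u)
    have key : ∀ v : X, v ∈ LinearMap.ker L.toLinearMap → ⟪P (j u), j v⟫ = 0 := by
      intro v hv
      have h1 : ⟪P (j u), j v⟫ = ⟪j' (P (j u)), v⟫ := by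
        rw [hj', ContinuousLinearMap.adjoint_inner_left]
      have h2 : j' (P (j u)) = T u - L u := by
        simp [hT]
      rw [h1, h2, hu, zero_sub, inner_neg_left, hLsym]
      have : L v = 0 := hv
      rw [this, inner_zero_right, neg_zero]
    have hPju : P (j u) = 0 := by
      have hjw' : j w = P (j u) := hjw
      have := key w hw
      rw [hjw'] at this
      exact inner_self_eq_zero.mp this
    have hLu : L u = 0 := by
      have := hu
      rw [hT] at this
      simpa [hPju] using this
    have : P (j u) = j u := hPfix (j u) ⟨u, hLu, rfl⟩
    rw [hPju] at this
    have : j u = j 0 := by simp [← this]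
    have := hjinj this
    exact this
  have hTker : LinearMap.ker T.toLinearMap = ⊥ := by
    rw [LinearMap.ker_eq_bot']
    intro u hu
    exact hTzero u hu
  -- compactness of T - id
  set K : X →L[ℝ] H := (m + P).comp j with hK
  set Kc : X →L[ℝ] X := j'.comp K with hKc
  have hKcompact : IsCompactOperator (⇑Kc) := by
    have h1 : IsCompactOperator (⇑((m + P).comp j)) := hjcompact.clm_comp (m + P)
    have h2 : IsCompactOperator (⇑(j'.comp ((m + P).comp j))) := h1.clm_comp j'
    exact h2
  have hTKc : ∀ u : X, T u = u + Kc u := by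
    intro u
    simp [hTapp, hKc, hK, add_assoc]
  -- bounded below
  have hbb : ∃ c : ℝ, 0 < c ∧ ∀ u : X, c * ‖u‖ ≤ ‖T u‖ := by
    by_contra hcon
    push_neg at hcon
    have hseq : ∀ n : ℕ, ∃ v : X, ‖v‖ = 1 ∧ ‖T v‖ < 1 / (n + 1) := by
      intro n
      obtain ⟨u, hu⟩ := hcon (1 / (n + 1)) (by positivity)
      have hune : u ≠ 0 := by
        intro h
        rw [h] at hu
        simp at hu
      refine ⟨‖u‖⁻¹ • u, ?_, ?_⟩
      · simp [norm_smul, inv_mul_cancel₀ (norm_ne_zero_iff.mpr hune)]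
      · rw [map_smul, norm_smul]
        simp only [norm_inv, norm_norm]
        rw [inv_mul_lt_iff₀ (norm_pos_iff.mpr hune)]
        calc ‖T u‖ < 1 / (n + 1) * ‖u‖ := hu
          _ = ‖u‖ * (1 / (n + 1)) := by ring
    choose v hv1 hv2 using hseq
    have hTv0 : Filter.Tendsto (fun n => T (v n)) Filter.atTop (nhds 0) := by
      rw [tendsto_iff_norm_sub_tendsto_zero]
      have : Filter.Tendsto (fun n : ℕ => 1 / ((n : ℝ) + 1)) Filter.atTop (nhds 0) :=
        tendsto_one_div_add_atTop_nhds_zero_nat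
      refine squeeze_zero (fun n => norm_nonneg _) (fun n => ?_) this
      simpa using (hv2 n).le
    have hmem : ∀ n, Kc (v n) ∈ closure ((Kc : X →ₗ[ℝ] X) '' Metric.closedBall 0 1) := by
      intro n
      exact subset_closure ⟨v n, by simp [hv1 n], rfl⟩
    have hKcompact' : IsCompactOperator ⇑(Kc : X →ₗ[ℝ] X) := hKcompact
    have hcpt : IsCompact (closure ((Kc : X →ₗ[ℝ] X) '' Metric.closedBall 0 1)) :=
      hKcompact'.isCompact_closure_image_closedBall 1
    obtain ⟨y, _, φ, hφ, hy⟩ := hcpt.tendsto_subseq hmem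
    have hvlim : Filter.Tendsto (fun n => v (φ n)) Filter.atTop (nhds (-y)) := by
      have : ∀ n, v (φ n) = T (v (φ n)) - Kc (v (φ n)) := by
        intro n; rw [hTKc]; abel
      have hlim : Filter.Tendsto (fun n => T (v (φ n)) - Kc (v (φ n))) Filter.atTop
          (nhds (0 - y)) := (hTv0.comp hφ.tendsto_atTop).sub hy
      rw [zero_sub] at hlim
      exact (Filter.tendsto_congr this).mpr hlim
    have hTy : T (-y) = 0 := by
      have h1 : Filter.Tendsto (fun n => T (v (φ n))) Filter.atTop (nhds (T (-y))) :=
        (T.continuous.tendsto _).comp hvlim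
      have h2 : Filter.Tendsto (fun n => T (v (φ n))) Filter.atTop (nhds 0) :=
        hTv0.comp hφ.tendsto_atTop
      exact tendsto_nhds_unique h1 h2
    have hy0 : -y = 0 := hTzero _ hTy
    have hny : ‖y‖ = 1 := by
      have : Filter.Tendsto (fun n => ‖v (φ n)‖) Filter.atTop (nhds ‖(-y)‖) :=
        hvlim.norm
      have h2 : Filter.Tendsto (fun n => ‖v (φ n)‖) Filter.atTop (nhds 1) := by
        simpa [hv1] using tendsto_const_nhds (α := ℝ) (f := Filter.atTop (α := ℕ))
      have := tendsto_nhds_unique this h2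
      simpa using this
    rw [show y = 0 by simpa using hy0] at hny
    simp at hny
  obtain ⟨c, hc, hbound⟩ := hbb
  -- closed range
  have hanti : AntilipschitzWith (⟨c, hc.le⟩ : NNReal)⁻¹ T := by
    apply T.antilipschitz_of_bound
    intro x
    change ‖x‖ ≤ c⁻¹ * ‖T x‖
    rw [← div_eq_inv_mul, le_div_iff₀ hc, mul_comm]
    exact hbound x
  have hclosed : IsClosed (Set.range ⇑T) := hanti.isClosed_range T.uniformContinuous
  have hcl2 : IsClosed ((LinearMap.range T.toLinearMap : Submodule ℝ X) : Set X) := by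
    have : ((LinearMap.range T.toLinearMap : Submodule ℝ X) : Set X) = Set.range ⇑T := by
      ext x; simp [LinearMap.mem_range]
    rw [this]; exact hclosed
  haveI : CompleteSpace (LinearMap.range T.toLinearMap) := hcl2.completeSpace_coe
  have horth : (LinearMap.range T.toLinearMap)ᗮ = ⊥ := by
    rw [Submodule.eq_bot_iff]
    intro x hx
    have hall : ∀ w : X, ⟪w, T x⟫ = 0 := fun w => by
      rw [← hTsym]
      exact (Submodule.mem_orthogonal _ x).mp hx (T w) (LinearMap.mem_range_self _ w)
    have hTx : T x = 0 := by
      have := hall (T x)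
      exact inner_self_eq_zero.mp this
    exact hTzero x hTx
  have hrange : LinearMap.range T.toLinearMap = ⊤ := Submodule.orthogonal_eq_bot_iff.mp horth
  refine ⟨(ContinuousLinearEquiv.ofBijective T hTker hrange).trans 𝔄, fun u => ?_⟩
  have h1 : (ContinuousLinearEquiv.ofBijective T hTker hrange) u = T u := rfl
  rw [ContinuousLinearEquiv.trans_apply, h1, hTapp u]
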